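/- Let g be a real constant, z_b : ℝ → ℝ differentiable, and h, u, w, σ, p̄, p_b : ℝ → ℝ → ℝ continuously differentiable functions of (x,t). Assume that at every point (x,t) the original SGN system holds: (i) ∂_t h + ∂_x(h·u) = 0; (ii) ∂_t(h·u) + ∂_x(h·u² + h·p̄) + g·h·∂_x h + (g·h + p_b)·∂_x z_b = 0; (iii) ∂_t(h·w) + ∂_x(h·u·w) = p_b; (iv) ∂_t(h·σ) + ∂_x(h·u·σ) = −6·p_b + 12·p̄; (v) σ = −h·∂_x u; (vi) w + (h/2)·∂_x u − u·∂_x z_b = 0. Define the energy Ẽ := (h/2)·(u² + w² + σ²/12 + g·(h + 2·z_b)). Then at every point (x,t): ∂_t Ẽ + ∂_x[u·(Ẽ + g·h²/2 + h·p̄)] = 0. -/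

import Mathlib

/-- Partial derivative with respect to the first (space) argument. -/
noncomputable def pdx (f : ℝ → ℝ → ℝ) (x t : ℝ) : ℝ := deriv (fun x' => f x' t) x

/-- Partial derivative with respect to the second (time) argument. -/
noncomputable def pdt (f : ℝ → ℝ → ℝ) (x t : ℝ) : ℝ := deriv (fun t' => f x t') t

private lemma sliceX {f : ℝ → ℝ → ℝ} (hf : ContDiff ℝ 1 (fun p : ℝ × ℝ => f p.1 p.2))
    (x t : ℝ) : HasDerivAt (fun x' => f x' t) (deriv (fun x' => f x' t) x) x := by
  have : DifferentiableAt ℝ (fun x' => f x' t) x :=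
    by
      have hd : Differentiable ℝ (fun x' : ℝ => (x', t)) :=
        Differentiable.prodMk differentiable_id (differentiable_const t)
      exact ((hf.differentiable (by simp)).comp hd).differentiableAt
  exact this.hasDerivAt

private lemma sliceT {f : ℝ → ℝ → ℝ} (hf : ContDiff ℝ 1 (fun p : ℝ × ℝ => f p.1 p.2))
    (x t : ℝ) : HasDerivAt (fun t' => f x t') (deriv (fun t' => f x t') t) t := by
  have : DifferentiableAt ℝ (fun t' => f x t') t :=
    by
      have hd : Differentiable ℝ (fun t' : ℝ => (x, t')) :=
        Differentiable.prodMk (differentiable_const x) differentiable_id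
      exact ((hf.differentiable (by simp)).comp hd).differentiableAt
  exact this.hasDerivAt

theorem stmt_3 (g : ℝ) (zb : ℝ → ℝ) (hzb : Differentiable ℝ zb)
    (h u w sg pbar pb : ℝ → ℝ → ℝ)
    (hh : ContDiff ℝ 1 (fun p : ℝ × ℝ => h p.1 p.2))
    (hu : ContDiff ℝ 1 (fun p : ℝ × ℝ => u p.1 p.2))
    (hw : ContDiff ℝ 1 (fun p : ℝ × ℝ => w p.1 p.2))
    (hsg : ContDiff ℝ 1 (fun p : ℝ × ℝ => sg p.1 p.2))
    (hpbar : ContDiff ℝ 1 (fun p : ℝ × ℝ => pbar p.1 p.2))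
    (hpb : ContDiff ℝ 1 (fun p : ℝ × ℝ => pb p.1 p.2))
    (mass : ∀ x t : ℝ, pdt h x t + pdx (fun x t => h x t * u x t) x t = 0)
    (momx : ∀ x t : ℝ,
      pdt (fun x t => h x t * u x t) x t
        + pdx (fun x t => h x t * (u x t) ^ 2 + h x t * pbar x t) x t
        + g * h x t * pdx h x t + (g * h x t + pb x t) * deriv zb x = 0)
    (momz : ∀ x t : ℝ,
      pdt (fun x t => h x t * w x t) x t
        + pdx (fun x t => h x t * u x t * w x t) x t = pb x t)
    (sigmaEvol : ∀ x t : ℝ,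
      pdt (fun x t => h x t * sg x t) x t
        + pdx (fun x t => h x t * u x t * sg x t) x t
      = -6 * pb x t + 12 * pbar x t)
    (sigmaDef : ∀ x t : ℝ, sg x t = -(h x t) * pdx u x t)
    (wDef : ∀ x t : ℝ, w x t + h x t / 2 * pdx u x t - u x t * deriv zb x = 0) :
    ∀ x t : ℝ,
      pdt (fun x t => h x t / 2 *
          ((u x t) ^ 2 + (w x t) ^ 2 + (sg x t) ^ 2 / 12 + g * (h x t + 2 * zb x))) x t
        + pdx (fun x t =>
            u x t * (h x t / 2 *
                ((u x t) ^ 2 + (w x t) ^ 2 + (sg x t) ^ 2 / 12 + g * (h x t + 2 * zb x))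
              + g * (h x t) ^ 2 / 2 + h x t * pbar x t)) x t = 0 := by
  intro x t
  have Hx := sliceX hh x t
  have Ht := sliceT hh x t
  have Ux := sliceX hu x t
  have Ut := sliceT hu x t
  have Wx := sliceX hw x t
  have Wt := sliceT hw x t
  have Sx := sliceX hsg x t
  have St := sliceT hsg x t
  have Px := sliceX hpbar x t
  have Zx : HasDerivAt zb (deriv zb x) x := (hzb x).hasDerivAt
  -- expanded hypotheses
  have mass' := mass x t
  have momx' := momx x t
  have momz' := momz x t
  have sev' := sigmaEvol x t
  have sd' := sigmaDef x t
  have wd' := wDef x t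
  simp only [pdx, pdt] at mass' momx' momz' sev' sd' wd' ⊢
  -- product rules for the hypotheses
  have e1 : HasDerivAt (fun x' => h x' t * u x' t) _ x := Hx.mul Ux
  rw [e1.deriv] at mass'
  have e2 : HasDerivAt (fun t' => h x t' * u x t') _ t := Ht.mul Ut
  rw [e2.deriv] at momx'
  have e3 : HasDerivAt (fun x' => h x' t * u x' t ^ 2 + h x' t * pbar x' t) _ x :=
    (Hx.mul (Ux.pow 2)).add (Hx.mul Px)
  rw [e3.deriv] at momx'
  have e4 : HasDerivAt (fun t' => h x t' * w x t') _ t := Ht.mul Wt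
  rw [e4.deriv] at momz'
  have e5 : HasDerivAt (fun x' => h x' t * u x' t * w x' t) _ x := (Hx.mul Ux).mul Wx
  rw [e5.deriv] at momz'
  have e6 : HasDerivAt (fun t' => h x t' * sg x t') _ t := Ht.mul St
  rw [e6.deriv] at sev'
  have e7 : HasDerivAt (fun x' => h x' t * u x' t * sg x' t) _ x := (Hx.mul Ux).mul Sx
  rw [e7.deriv] at sev'
  -- product rules for the goal
  have e8 : HasDerivAt (fun t' => h x t' / 2 *
      (u x t' ^ 2 + w x t' ^ 2 + sg x t' ^ 2 / 12 + g * (h x t' + 2 * zb x))) _ t :=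
    (Ht.div_const 2).mul
      ((((Ut.pow 2).add (Wt.pow 2)).add ((St.pow 2).div_const 12)).add
        ((Ht.add_const (2 * zb x)).const_mul g))
  rw [e8.deriv]
  have e9 : HasDerivAt (fun x' =>
      u x' t * (h x' t / 2 *
          (u x' t ^ 2 + w x' t ^ 2 + sg x' t ^ 2 / 12 + g * (h x' t + 2 * zb x'))
        + g * h x' t ^ 2 / 2 + h x' t * pbar x' t)) _ x :=
    Ux.mul
      ((((Hx.div_const 2).mul
        ((((Ux.pow 2).add (Wx.pow 2)).add ((Sx.pow 2).div_const 12)).add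
          ((Hx.add ((Zx.const_mul 2))).const_mul g))).add
        (((Hx.pow 2).const_mul g).div_const 2)).add (Hx.mul Px))
  rw [e9.deriv]
  simp only [Pi.mul_apply, Pi.pow_apply, Pi.add_apply] at momx' momz' sev' ⊢
  linear_combination u x t * momx' + w x t * momz' + (sg x t / 12) * sev' +
    (-(u x t ^ 2 + w x t ^ 2 + sg x t ^ 2 / 12) / 2 + g * h x t + g * zb x) * mass' +
    (pbar x t - pb x t / 2) * sd' + pb x t * wd'
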